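/- Let σ(z) = tanh(z/√2), let Q : [−1,1] → ℝ be odd, continuously differentiable on (−1,1), strictly increasing, with Q(1) = 1, and set Q₁(u) = (3/2)(u − u³/3). Assume u ↦ |Q(u) − Q₁(u)|/(1 − u²)³ is integrable on (0,1). Define Φ₁(z) = (4/3)·σ'(z)·∫₀^{σ(z)} (Q(v) − Q₁(v))/(1 − v²)³ dv. Then the dynamic moment 𝓙₁[Q] := ∫_{−∞}^{∞} Q'(σ(z))·Φ₁(z) dz satisfies 𝓙₁[Q] = (8/3)·∫₀¹ (Q(u) − Q₁(u))·(1 − Q(u))/(1 − u²)³ du. -/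

import Mathlib

open MeasureTheory intervalIntegral

/-- The heteroclinic profile `σ(z) = tanh(z/√2)`. -/
noncomputable def sigma (z : ℝ) : ℝ := Real.tanh (z / Real.sqrt 2)

/-- The NMN reference kernel `Q₁(u) = (3/2)(u − u³/3)`. -/
noncomputable def Q₁ (u : ℝ) : ℝ := (3 / 2) * (u - u ^ 3 / 3)

lemma tanh_hasDerivAt (x : ℝ) : HasDerivAt Real.tanh (1 - Real.tanh x ^ 2) x := by
  have hc : Real.cosh x ≠ 0 := ne_of_gt (Real.cosh_pos x)
  have h := (Real.hasDerivAt_sinh x).div (Real.hasDerivAt_cosh x) hc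
  have hfun : (Real.sinh / Real.cosh) = Real.tanh :=
    funext fun y => (Real.tanh_eq_sinh_div_cosh y).symm
  rw [hfun] at h
  refine h.congr_deriv ?_
  rw [Real.tanh_eq_sinh_div_cosh]
  have h2 := Real.cosh_sq_sub_sinh_sq x
  field_simp

lemma abs_tanh_lt_one (x : ℝ) : |Real.tanh x| < 1 := by
  have hc : 0 < Real.cosh x := Real.cosh_pos x
  have h2 := Real.cosh_sq_sub_sinh_sq x
  rw [Real.tanh_eq_sinh_div_cosh, abs_div, abs_of_pos hc, div_lt_one hc]
  nlinarith [abs_nonneg (Real.sinh x), sq_abs (Real.sinh x)]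

lemma tanh_surj {y : ℝ} (hy : y ∈ Set.Ioo (-1 : ℝ) 1) : ∃ x, Real.tanh x = y := by
  obtain ⟨h1, h2⟩ := hy
  have hy1 : (0:ℝ) < 1 + y := by linarith
  have hy2 : (0:ℝ) < 1 - y := by linarith
  refine ⟨Real.log ((1 + y) / (1 - y)) / 2, ?_⟩
  set x := Real.log ((1 + y) / (1 - y)) / 2 with hx
  have he : Real.exp x * Real.exp x = (1 + y) / (1 - y) := by
    rw [← Real.exp_add]
    have : x + x = Real.log ((1 + y) / (1 - y)) := by rw [hx]; ring
    rw [this, Real.exp_log (by positivity)]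
  have hepos : 0 < Real.exp x := Real.exp_pos x
  rw [Real.tanh_eq_sinh_div_cosh, Real.sinh_eq, Real.cosh_eq, Real.exp_neg]
  have he' : Real.exp x * Real.exp x * (1 - y) = 1 + y := by
    rw [he]; field_simp
  rw [div_div_div_eq]
  field_simp
  nlinarith [he', hepos]

lemma sigma_hasDerivAt (z : ℝ) : HasDerivAt sigma ((1 - sigma z ^ 2) / Real.sqrt 2) z := by
  have hs : (0:ℝ) < Real.sqrt 2 := Real.sqrt_pos.2 (by norm_num)
  have h := (tanh_hasDerivAt (z / Real.sqrt 2)).comp z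
    ((hasDerivAt_id z).div_const (Real.sqrt 2))
  have e : (1 - sigma z ^ 2) / Real.sqrt 2 = (1 - Real.tanh (id z / Real.sqrt 2) ^ 2) * (1 / Real.sqrt 2) := by
    simp only [sigma, id]; ring
  rw [e]; exact h

lemma sigma_mem (z : ℝ) : sigma z ∈ Set.Ioo (-1 : ℝ) 1 := by
  have := abs_tanh_lt_one (z / Real.sqrt 2)
  rw [abs_lt] at this
  exact ⟨this.1, this.2⟩

lemma deriv_sigma (z : ℝ) : deriv sigma z = (1 - sigma z ^ 2) / Real.sqrt 2 :=
  (sigma_hasDerivAt z).deriv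

lemma deriv_sigma_pos (z : ℝ) : 0 < deriv sigma z := by
  rw [deriv_sigma]
  have h := sigma_mem z
  have hs : (0:ℝ) < Real.sqrt 2 := Real.sqrt_pos.2 (by norm_num)
  have h1 : sigma z ^ 2 < 1 := by nlinarith [h.1, h.2]
  apply div_pos (by linarith) hs

lemma sigma_strictMono : StrictMono sigma :=
  strictMono_of_deriv_pos deriv_sigma_pos

lemma sigma_range : Set.range sigma = Set.Ioo (-1 : ℝ) 1 := by
  ext y
  constructor
  · rintro ⟨z, rfl⟩; exact sigma_mem z
  · intro hy
    obtain ⟨x, hx⟩ := tanh_surj hy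
    have hs : Real.sqrt 2 ≠ 0 := ne_of_gt (Real.sqrt_pos.2 (by norm_num))
    exact ⟨Real.sqrt 2 * x, by simp [sigma, mul_comm, mul_div_assoc, hs, hx]⟩


set_option maxHeartbeats 1000000 in
/-- Single-integral formula for the dynamic moment: for `Q` odd, `C¹` on `(−1,1)`,
strictly increasing, with `Q(1) = 1`, and integrability of
`u ↦ |Q(u) − Q₁(u)|/(1 − u²)³` on `(0,1)`, the dynamic moment
`𝓙₁[Q] = ∫ Q'(σ(z))·Φ₁(z) dz` equals
`(8/3)∫₀¹ (Q(u) − Q₁(u))(1 − Q(u))/(1 − u²)³ du`. -/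
theorem dynamic_moment_formula
    (Q : ℝ → ℝ) (hodd : ∀ u : ℝ, Q (-u) = -Q u)
    (hQ : ContDiffOn ℝ 1 Q (Set.Ioo (-1) 1))
    (hmono : StrictMonoOn Q (Set.Icc (-1) 1))
    (hQ1 : Q 1 = 1)
    (hint : IntegrableOn (fun u : ℝ => |Q u - Q₁ u| / (1 - u ^ 2) ^ 3) (Set.Ioo 0 1))
    (Φ₁ : ℝ → ℝ)
    (hΦ₁ : ∀ z : ℝ, Φ₁ z =
      (4 / 3) * deriv sigma z *
        ∫ v in (0:ℝ)..(sigma z), (Q v - Q₁ v) / (1 - v ^ 2) ^ 3) :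
    (∫ z : ℝ, deriv Q (sigma z) * Φ₁ z)
      = (8 / 3) * ∫ u in (0:ℝ)..1, (Q u - Q₁ u) * (1 - Q u) / (1 - u ^ 2) ^ 3 := by
  set g : ℝ → ℝ := fun v => (Q v - Q₁ v) / (1 - v ^ 2) ^ 3 with hgdef
  set G : ℝ → ℝ := fun x => ∫ v in (0:ℝ)..x, g v with hGdef
  set h : ℝ → ℝ := fun u => (4 / 3) * deriv Q u * G u with hhdef
  -- basic values
  have hQ0 : Q 0 = 0 := by have := hodd 0; simp at this; linarith
  have hQm1 : Q (-1) = -1 := by rw [hodd 1, hQ1]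
  have hmono' : MonotoneOn Q (Set.Icc (-1 : ℝ) 1) := hmono.monotoneOn
  have hQle : ∀ u ∈ Set.Icc (-1 : ℝ) 1, -1 ≤ Q u ∧ Q u ≤ 1 := by
    intro u hu
    constructor
    · rw [← hQm1]; exact hmono' (by norm_num) hu hu.1
    · rw [← hQ1]; exact hmono' hu (by norm_num) hu.2
  -- derivatives of Q
  have hQdiff : ∀ y ∈ Set.Ioo (-1 : ℝ) 1, HasDerivAt Q (deriv Q y) y := by
    intro y hy
    exact (((hQ.differentiableOn one_ne_zero) y hy).differentiableAt
      (isOpen_Ioo.mem_nhds hy)).hasDerivAt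
  have hQcont : ContinuousOn Q (Set.Ioo (-1 : ℝ) 1) := hQ.continuousOn
  have hQ'cont : ContinuousOn (deriv Q) (Set.Ioo (-1 : ℝ) 1) := by
    have h1 := hQ.continuousOn_derivWithin (isOpen_Ioo.uniqueDiffOn) le_rfl
    exact h1.congr fun x hx => (derivWithin_of_isOpen isOpen_Ioo hx).symm
  have hQ'nonneg : ∀ y ∈ Set.Ioo (-1 : ℝ) 1, 0 ≤ deriv Q y := by
    intro y hy
    have hd := hQdiff y hy
    have hs : Filter.Tendsto (slope Q y) (nhdsWithin y (Set.Ioi y)) (nhds (deriv Q y)) :=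
      (hasDerivAt_iff_tendsto_slope.1 hd).mono_left
        (nhdsWithin_mono _ fun x hx => ne_of_gt hx)
    refine ge_of_tendsto hs ?_
    filter_upwards [Ioo_mem_nhdsGT_of_mem ⟨le_refl y, hy.2⟩] with x hx
    have : Q y ≤ Q x := hmono' ⟨hy.1.le, hy.2.le⟩ ⟨by linarith [hy.1, hx.1], hx.2.le⟩ hx.1.le
    rw [slope_def_field]
    exact div_nonneg (by linarith) (by linarith [hx.1])
  have hQ'even : ∀ u : ℝ, deriv Q (-u) = deriv Q u := by
    intro u
    have h1 : deriv (fun x => Q (-x)) u = -deriv Q (-u) := deriv_comp_neg Q u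
    have h2 : (fun x => Q (-x)) = fun x => -Q x := funext hodd
    rw [h2, deriv.fun_neg] at h1
    linarith [h1]
  -- g basics
  have hQ₁odd : ∀ v : ℝ, Q₁ (-v) = -Q₁ v := by intro v; simp [Q₁]; ring
  have hgodd : ∀ v : ℝ, g (-v) = -g v := by
    intro v
    simp only [hgdef, hodd, hQ₁odd, neg_sq]
    ring
  have hQ₁cont : Continuous Q₁ := by unfold Q₁; continuity
  have hgcont : ContinuousOn g (Set.Ioo (-1 : ℝ) 1) := by
    apply ContinuousOn.div (hQcont.sub hQ₁cont.continuousOn) (by fun_prop)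
    intro x hx
    have h0 : 0 < 1 - x ^ 2 := by nlinarith [hx.1, hx.2]
    exact pow_ne_zero 3 (ne_of_gt h0)
  have habs : ∀ x ∈ Set.Ioo (0:ℝ) 1, |g x| = |Q x - Q₁ x| / (1 - x ^ 2) ^ 3 := by
    intro x hx
    have h0 : 0 < 1 - x ^ 2 := by nlinarith [hx.1, hx.2]
    rw [hgdef, abs_div, abs_of_pos (pow_pos h0 3)]
  have hgaesm : AEStronglyMeasurable g (volume.restrict (Set.Ioo (0:ℝ) 1)) :=
    (hgcont.mono (Set.Ioo_subset_Ioo (by norm_num) le_rfl)).aestronglyMeasurable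
      measurableSet_Ioo
  have hgint : IntegrableOn g (Set.Ioo (0:ℝ) 1) := by
    rw [IntegrableOn, ← integrable_norm_iff hgaesm]
    exact hint.congr_fun (fun x hx => by rw [Real.norm_eq_abs, habs x hx]) measurableSet_Ioo
  have hGeven : ∀ x : ℝ, G (-x) = G x := by
    intro x
    have h2 : ∫ v in (0:ℝ)..x, g (-v) = ∫ v in (-x)..(-(0:ℝ)), g v :=
      intervalIntegral.integral_comp_neg g
    rw [neg_zero] at h2
    have h3 : ∫ v in (0:ℝ)..x, g (-v) = -G x := by
      simp only [hgodd]
      rw [intervalIntegral.integral_neg]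
    have h4 : G (-x) = -∫ v in (-x)..(0:ℝ), g v := intervalIntegral.integral_symm (-x) 0
    rw [h4, ← h2, h3, neg_neg]
  have hheven : ∀ x : ℝ, h (-x) = h x := by
    intro x; rw [hhdef]; simp only [hQ'even, hGeven]
  -- limit of Q at 1⁻
  have hQlim : Filter.Tendsto Q (nhdsWithin 1 (Set.Iio 1)) (nhds 1) := by
    set Q' : ℝ → ℝ := fun u => Q (max u (-1)) with hQ'def
    have hmem : ∀ u : ℝ, u < 1 → max u (-1) ∈ Set.Icc (-1:ℝ) 1 :=
      fun u hu => ⟨le_max_right _ _, max_le hu.le (by norm_num)⟩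
    have hmax : MonotoneOn Q' (Set.Iio (1:ℝ)) := by
      intro a ha b hb hab
      exact hmono' (hmem a ha) (hmem b hb) (max_le_max hab le_rfl)
    have hbdd : BddAbove (Q' '' Set.Iio 1) := by
      refine ⟨1, ?_⟩
      rintro _ ⟨u, hu, rfl⟩
      exact (hQle _ (hmem u hu)).2
    have hT := hmax.tendsto_nhdsLT hbdd
    set L := sSup (Q' '' Set.Iio 1) with hL
    have hEq : ∀ᶠ u in nhdsWithin 1 (Set.Iio 1), Q' u = Q u := by
      filter_upwards [Ioo_mem_nhdsLT_of_mem
        (Set.mem_Ioc.2 ⟨(by norm_num : (0:ℝ) < 1), le_rfl⟩)] with u hu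
      rw [hQ'def]
      simp only
      rw [max_eq_left (by linarith [hu.1] : (-1:ℝ) ≤ u)]
    have hTQ : Filter.Tendsto Q (nhdsWithin 1 (Set.Iio 1)) (nhds L) := hT.congr' hEq
    have hL_le : L ≤ 1 := by
      apply csSup_le ⟨Q' 0, Set.mem_image_of_mem _ (by norm_num)⟩
      rintro _ ⟨u, hu, rfl⟩
      exact (hQle _ (hmem u hu)).2
    rcases eq_or_lt_of_le hL_le with hL1 | hL1
    · rwa [hL1] at hTQ
    · exfalso
      set ε := (1 - L) / 2 with hεdef
      have hε : 0 < ε := by rw [hεdef]; linarith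
      have hQ₁lim : Filter.Tendsto Q₁ (nhdsWithin 1 (Set.Iio 1)) (nhds 1) := by
        have h1 : Q₁ 1 = 1 := by norm_num [Q₁]
        have h2 : Filter.Tendsto Q₁ (nhdsWithin 1 (Set.Iio 1)) (nhds (Q₁ 1)) :=
          (hQ₁cont.tendsto 1).mono_left nhdsWithin_le_nhds
        rwa [h1] at h2
      have hdiff : Filter.Tendsto (fun u => Q u - Q₁ u) (nhdsWithin 1 (Set.Iio 1))
          (nhds (L - 1)) := hTQ.sub hQ₁lim
      have hev : ∀ᶠ u in nhdsWithin 1 (Set.Iio 1),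
          u ∈ Set.Ioo (1/2 : ℝ) 1 ∧ ε ≤ |Q u - Q₁ u| := by
        have h1 : ∀ᶠ u in nhdsWithin 1 (Set.Iio 1), |(Q u - Q₁ u) - (L - 1)| < ε :=
          hdiff (Metric.ball_mem_nhds _ hε)
        filter_upwards [h1, Ioo_mem_nhdsLT_of_mem
          (Set.mem_Ioc.2 ⟨(by norm_num : (1/2:ℝ) < 1), le_rfl⟩)] with u h1u h2u
        refine ⟨h2u, ?_⟩
        rw [abs_lt] at h1u
        rw [abs_sub_comm, le_abs]
        left
        rw [hεdef] at h1u ⊢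
        linarith [h1u.2]
      obtain ⟨c, hc, hsub⟩ := mem_nhdsLT_iff_exists_Ioo_subset.1 hev
      set c' := max c (1/2 : ℝ) with hc'def
      have hc'lt : c' < 1 := max_lt hc (by norm_num)
      have hc'half : (1/2 : ℝ) ≤ c' := le_max_right _ _
      have hprop : ∀ u ∈ Set.Ioo c' 1, u ∈ Set.Ioo (1/2:ℝ) 1 ∧ ε ≤ |Q u - Q₁ u| :=
        fun u hu => hsub ⟨lt_of_le_of_lt (le_max_left _ _) hu.1, hu.2⟩
      have hbound : ∀ u ∈ Set.Ioo c' 1, ε/8 * (1 - u)⁻¹ ≤ |Q u - Q₁ u| / (1 - u^2)^3 := by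
        intro u hu
        obtain ⟨⟨hu1, hu2⟩, habs'⟩ := hprop u hu
        have h1u : 0 < 1 - u := by linarith
        have hpos2 : 0 < 1 - u^2 := by nlinarith
        have hden : 0 < (1 - u^2)^3 := by positivity
        have e1 : 1 - u^2 ≤ 2*(1-u) := by nlinarith
        have hdle : (1 - u^2)^3 ≤ 8 * (1 - u) := by
          calc (1 - u^2)^3 ≤ (2*(1-u))^3 := pow_le_pow_left₀ hpos2.le e1 3
            _ = 8 * (1-u)^3 := by ring
            _ ≤ 8 * (1-u) := by nlinarith [sq_nonneg (1-u), mul_pos h1u h1u]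
        have := div_le_div₀ (abs_nonneg (Q u - Q₁ u)) habs' hden hdle
        calc ε/8 * (1-u)⁻¹ = ε / (8 * (1 - u)) := by rw [← div_eq_mul_inv, div_div]
          _ ≤ |Q u - Q₁ u| / (1 - u^2)^3 := this
      have hbig : IntegrableOn (fun u : ℝ => |Q u - Q₁ u| / (1 - u ^ 2) ^ 3)
          (Set.Ioo c' 1) := hint.mono_set
        (Set.Ioo_subset_Ioo (by linarith : (0:ℝ) ≤ c') le_rfl)
      have hsm_small : AEStronglyMeasurable (fun u : ℝ => ε/8 * (1 - u)⁻¹)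
          (volume.restrict (Set.Ioo c' 1)) :=
        (((measurable_const.sub measurable_id).inv).const_mul (ε/8)).aestronglyMeasurable
      have hsmall : IntegrableOn (fun u : ℝ => ε/8 * (1 - u)⁻¹) (Set.Ioo c' 1) := by
        apply Integrable.mono' hbig hsm_small
        refine (MeasureTheory.ae_restrict_iff' measurableSet_Ioo).2
          (Filter.Eventually.of_forall fun u hu => ?_)
        have h1u : 0 < 1 - u := by linarith [hu.2]
        rw [Real.norm_eq_abs, abs_of_pos (by positivity)]
        exact hbound u hu
      have hinv : IntegrableOn (fun u : ℝ => (1 - u)⁻¹) (Set.Ioo c' 1) := by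
        have h8 : IntegrableOn (fun x : ℝ => 8/ε * (ε/8 * (1 - x)⁻¹)) (Set.Ioo c' 1) :=
          hsmall.const_mul (8/ε)
        refine IntegrableOn.congr_fun h8 (fun x hx => ?_) measurableSet_Ioo
        have h1 : (1:ℝ) - x ≠ 0 := ne_of_gt (by linarith [hx.2] : (0:ℝ) < 1 - x)
        field_simp
      have hinv2 : IntegrableOn (fun u : ℝ => (u - 1)⁻¹) (Set.Ioo c' 1) := by
        have hn : IntegrableOn (fun u : ℝ => -(1 - u)⁻¹) (Set.Ioo c' 1) := hinv.neg
        exact IntegrableOn.congr_fun hn (fun x _ => by rw [← inv_neg, neg_sub]) measurableSet_Ioo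
      have hii : IntervalIntegrable (fun u : ℝ => (u - 1)⁻¹) volume c' 1 := by
        rw [intervalIntegrable_iff_integrableOn_Ioo_of_le hc'lt.le]
        exact hinv2
      rw [intervalIntegrable_sub_inv_iff] at hii
      rcases hii with h' | h'
      · exact absurd h' (ne_of_lt hc'lt)
      · exact h' (Set.right_mem_uIcc)

  -- continuity of Q on [0,1]
  have hQcont01 : ContinuousOn Q (Set.Icc (0:ℝ) 1) := by
    intro x hx
    rcases eq_or_lt_of_le hx.2 with h1 | h1
    · subst h1
      have hsub : Set.Icc (0:ℝ) 1 ⊆ insert 1 (Set.Iio 1) := by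
        intro t ht
        rcases eq_or_lt_of_le ht.2 with h | h
        · exact Set.mem_insert_iff.2 (Or.inl h)
        · exact Set.mem_insert_iff.2 (Or.inr h)
      have h2 : Filter.Tendsto Q (nhdsWithin 1 (insert 1 (Set.Iio 1))) (nhds 1) := by
        rw [nhdsWithin_insert, Filter.tendsto_sup]
        constructor
        · rw [Filter.tendsto_pure_left]
          intro s hs
          rw [hQ1]
          exact mem_of_mem_nhds hs
        · exact hQlim
      unfold ContinuousWithinAt
      rw [hQ1]
      exact h2.mono_left (nhdsWithin_mono _ hsub)
    · exact (hQcont.continuousAt (isOpen_Ioo.mem_nhds ⟨by linarith [hx.1], h1⟩)).continuousWithinAt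
  -- integrability of deriv Q
  have hQ'int : IntegrableOn (deriv Q) (Set.Ioc (0:ℝ) 1) := by
    apply intervalIntegral.integrableOn_deriv_of_nonneg hQcont01
    · intro x hx; exact hQdiff x ⟨by linarith [hx.1], hx.2⟩
    · intro x hx; exact hQ'nonneg x ⟨by linarith [hx.1], hx.2⟩
  have hQ'intoo : IntegrableOn (deriv Q) (Set.Ioo (0:ℝ) 1) :=
    hQ'int.mono_set Set.Ioo_subset_Ioc_self
  -- G continuous on [0,1], bounded
  have hgicc : IntegrableOn g (Set.Icc (0:ℝ) 1) := by
    rw [integrableOn_Icc_iff_integrableOn_Ioo]; exact hgint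
  have hGcont : ContinuousOn G (Set.Icc (0:ℝ) 1) := by
    have := intervalIntegral.continuousOn_primitive_interval
      (μ := volume) (f := g) (a := 0) (b := 1) (by rwa [Set.uIcc_of_le (by norm_num)])
    rwa [Set.uIcc_of_le (by norm_num : (0:ℝ) ≤ 1)] at this
  obtain ⟨M, hM⟩ := isCompact_Icc.exists_bound_of_continuousOn hGcont
  -- derivative of G
  have hGderiv : ∀ y ∈ Set.Ioo (-1 : ℝ) 1, HasDerivAt G (g y) y := by
    intro y hy
    apply intervalIntegral.integral_hasDerivAt_right
    · apply ContinuousOn.intervalIntegrable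
      apply hgcont.mono
      intro t ht
      rw [Set.mem_uIcc] at ht
      constructor
      · rcases ht with ⟨ht1, _⟩ | ⟨ht1, _⟩ <;> linarith [hy.1]
      · rcases ht with ⟨_, ht2⟩ | ⟨_, ht2⟩ <;> linarith [hy.2]
    · exact (hgcont.stronglyMeasurableAtFilter isOpen_Ioo) y hy
    · exact hgcont.continuousAt (isOpen_Ioo.mem_nhds hy)
  -- integrability of the two products on (0,1)
  have hsub01 : Set.Ioo (0:ℝ) 1 ⊆ Set.Ioo (-1:ℝ) 1 := Set.Ioo_subset_Ioo (by norm_num) le_rfl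
  have h1int : IntegrableOn (fun y => g y * (1 - Q y)) (Set.Ioo (0:ℝ) 1) := by
    have haesm : AEStronglyMeasurable (fun y => g y * (1 - Q y))
        (volume.restrict (Set.Ioo (0:ℝ) 1)) :=
      hgaesm.mul (aestronglyMeasurable_const.sub
        ((hQcont.mono hsub01).aestronglyMeasurable measurableSet_Ioo))
    apply Integrable.mono' (hint.const_mul 2) haesm
    refine (MeasureTheory.ae_restrict_iff' measurableSet_Ioo).2
      (Filter.Eventually.of_forall fun x hx => ?_)
    have hb := hQle x ⟨by linarith [hx.1], hx.2.le⟩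
    have h2 : |1 - Q x| ≤ 2 := abs_le.2 ⟨by linarith [hb.2], by linarith [hb.1]⟩
    rw [Real.norm_eq_abs, abs_mul, habs x hx]
    have h3 : (0:ℝ) ≤ |Q x - Q₁ x| / (1 - x ^ 2) ^ 3 := by
      rw [← habs x hx]; exact abs_nonneg _
    calc |Q x - Q₁ x| / (1 - x ^ 2) ^ 3 * |1 - Q x|
        ≤ |Q x - Q₁ x| / (1 - x ^ 2) ^ 3 * 2 := mul_le_mul_of_nonneg_left h2 h3
      _ = 2 * (|Q x - Q₁ x| / (1 - x ^ 2) ^ 3) := by ring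
  have hM0 : 0 ≤ M := le_trans (norm_nonneg (G 0)) (hM 0 (by norm_num))
  have hGaesm : AEStronglyMeasurable G (volume.restrict (Set.Ioo (0:ℝ) 1)) :=
    (hGcont.mono Set.Ioo_subset_Icc_self).aestronglyMeasurable measurableSet_Ioo
  have hQ'aesm : AEStronglyMeasurable (deriv Q) (volume.restrict (Set.Ioo (0:ℝ) 1)) :=
    (measurable_deriv Q).aestronglyMeasurable
  have h2int : IntegrableOn (fun y => G y * deriv Q y) (Set.Ioo (0:ℝ) 1) := by
    apply Integrable.mono' (hQ'intoo.const_mul M) (hGaesm.mul hQ'aesm)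
    refine (MeasureTheory.ae_restrict_iff' measurableSet_Ioo).2
      (Filter.Eventually.of_forall fun x hx => ?_)
    have hd0 : 0 ≤ deriv Q x := hQ'nonneg x (hsub01 hx)
    have hGb : |G x| ≤ M := by
      have := hM x (Set.Ioo_subset_Icc_self hx); rwa [Real.norm_eq_abs] at this
    show ‖G x * deriv Q x‖ ≤ M * deriv Q x
    rw [Real.norm_eq_abs, abs_mul, abs_of_nonneg hd0]
    exact mul_le_mul_of_nonneg_right hGb hd0
  -- improper FTC on (0,1)
  have hiint1 : IntervalIntegrable (fun y => g y * (1 - Q y)) volume 0 1 := by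
    rw [intervalIntegrable_iff_integrableOn_Ioo_of_le zero_le_one]; exact h1int
  have hiint2 : IntervalIntegrable (fun y => G y * deriv Q y) volume 0 1 := by
    rw [intervalIntegrable_iff_integrableOn_Ioo_of_le zero_le_one]; exact h2int
  have key_eq : ∫ y in (0:ℝ)..1, G y * deriv Q y = ∫ y in (0:ℝ)..1, g y * (1 - Q y) := by
    have hFder : ∀ y ∈ Set.Ioo (0:ℝ) 1, HasDerivAt (fun t => G t * (1 - Q t))
        (g y * (1 - Q y) - G y * deriv Q y) y := by
      intro y hy
      have hy' : y ∈ Set.Ioo (-1:ℝ) 1 := hsub01 hy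
      have hd := (hGderiv y hy').mul ((hasDerivAt_const y (1:ℝ)).sub (hQdiff y hy'))
      refine hd.congr_deriv ?_
      simp only [Pi.sub_apply]
      ring
    have hFa : Filter.Tendsto (fun t => G t * (1 - Q t)) (nhdsWithin 0 (Set.Ioi 0)) (nhds 0) := by
      have hGc : ContinuousAt G 0 := (hGderiv 0 (by norm_num)).continuousAt
      have hQc : ContinuousAt Q 0 := hQcont.continuousAt (isOpen_Ioo.mem_nhds (by norm_num))
      have hc : ContinuousAt (fun t => G t * (1 - Q t)) 0 :=
        hGc.mul (continuousAt_const.sub hQc)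
      have h0 : G 0 * (1 - Q 0) = 0 := by
        rw [hGdef]
        simp [hQ0]
      have := hc.tendsto.mono_left (nhdsWithin_le_nhds (s := Set.Ioi (0:ℝ)))
      rwa [h0] at this
    have hFb : Filter.Tendsto (fun t => G t * (1 - Q t)) (nhdsWithin 1 (Set.Iio 1)) (nhds 0) := by
      have hGb : Filter.Tendsto G (nhdsWithin 1 (Set.Iio 1)) (nhds (G 1)) := by
        have h1 : ContinuousWithinAt G (Set.Icc 0 1) 1 := hGcont 1 (by norm_num)
        refine h1.tendsto.mono_left ?_
        rw [← nhdsWithin_Ioo_eq_nhdsLT (zero_lt_one)]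
        exact nhdsWithin_mono _ Set.Ioo_subset_Icc_self
      have h2 : Filter.Tendsto (fun t => (1:ℝ) - Q t) (nhdsWithin 1 (Set.Iio 1))
          (nhds (1 - 1)) := (tendsto_const_nhds (x := (1:ℝ))).sub hQlim
      have := hGb.mul h2
      simpa using this
    have hFTC := intervalIntegral.integral_eq_sub_of_hasDerivAt_of_tendsto zero_lt_one
      hFder (hiint1.sub hiint2) hFa hFb
    rw [intervalIntegral.integral_sub hiint1 hiint2] at hFTC
    have : (0:ℝ) - 0 = 0 := by ring
    rw [this] at hFTC
    linarith [hFTC]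
  -- integrability of h on (0,1)
  have hhint : IntegrableOn h (Set.Ioo (0:ℝ) 1) := by
    have haesm : AEStronglyMeasurable h (volume.restrict (Set.Ioo (0:ℝ) 1)) := by
      rw [hhdef]
      exact (aestronglyMeasurable_const.mul hQ'aesm).mul hGaesm
    apply Integrable.mono' (hQ'intoo.const_mul (4/3 * M)) haesm
    refine (MeasureTheory.ae_restrict_iff' measurableSet_Ioo).2
      (Filter.Eventually.of_forall fun x hx => ?_)
    have hd0 : 0 ≤ deriv Q x := hQ'nonneg x (hsub01 hx)
    have hGb : |G x| ≤ M := by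
      have := hM x (Set.Ioo_subset_Icc_self hx); rwa [Real.norm_eq_abs] at this
    show ‖4/3 * deriv Q x * G x‖ ≤ 4/3 * M * deriv Q x
    rw [Real.norm_eq_abs, abs_mul, abs_mul, abs_of_nonneg hd0,
      abs_of_nonneg (by norm_num : (0:ℝ) ≤ 4/3)]
    calc 4/3 * deriv Q x * |G x| ≤ 4/3 * deriv Q x * M := by
          apply mul_le_mul_of_nonneg_left hGb (by positivity)
      _ = 4/3 * M * deriv Q x := by ring
  -- substitution step
  have hsubst : (∫ z : ℝ, deriv Q (sigma z) * Φ₁ z) = ∫ x in Set.Ioo (-1:ℝ) 1, h x := by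
    have hinj : Set.InjOn sigma Set.univ := sigma_strictMono.injective.injOn
    have hder : ∀ z ∈ Set.univ, HasDerivWithinAt sigma (deriv sigma z) Set.univ z := by
      intro z _
      rw [deriv_sigma]
      exact (sigma_hasDerivAt z).hasDerivWithinAt
    have h0 := MeasureTheory.integral_image_eq_integral_abs_deriv_smul
      MeasurableSet.univ hder hinj h
    rw [Set.image_univ, sigma_range] at h0
    rw [h0, MeasureTheory.setIntegral_univ]
    apply MeasureTheory.integral_congr_ae
    apply Filter.Eventually.of_forall
    intro z
    show deriv Q (sigma z) * Φ₁ z = |deriv sigma z| • h (sigma z)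
    rw [hΦ₁ z, abs_of_pos (deriv_sigma_pos z), smul_eq_mul, hhdef]
    simp only [hGdef]
    ring
  -- reflection step
  have hrefl : ∫ x in Set.Ioo (-1:ℝ) 1, h x = 2 * ∫ x in Set.Ioo (0:ℝ) 1, h x := by
    have himneg : (fun x : ℝ => -x) '' Set.Ioo (0:ℝ) 1 = Set.Ioo (-1:ℝ) 0 := by
      ext t
      simp only [Set.mem_image, Set.mem_Ioo]
      constructor
      · rintro ⟨y, ⟨hy1, hy2⟩, rfl⟩
        exact ⟨by linarith, by linarith⟩
      · rintro ⟨ht1, ht2⟩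
        exact ⟨-t, ⟨by linarith, by linarith⟩, by ring⟩
    have hnder : ∀ x ∈ Set.Ioo (0:ℝ) 1,
        HasDerivWithinAt (fun t : ℝ => -t) (-1 : ℝ) (Set.Ioo (0:ℝ) 1) x :=
      fun x _ => (hasDerivAt_neg x).hasDerivWithinAt
    have hninj : Set.InjOn (fun t : ℝ => -t) (Set.Ioo 0 1) := neg_injective.injOn
    have hneg0 := MeasureTheory.integral_image_eq_integral_abs_deriv_smul
      measurableSet_Ioo hnder hninj h
    rw [himneg] at hneg0
    have hIoo_neg : ∫ x in Set.Ioo (-1:ℝ) 0, h x = ∫ x in Set.Ioo (0:ℝ) 1, h x := by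
      rw [hneg0]
      apply MeasureTheory.setIntegral_congr_fun measurableSet_Ioo
      intro x _
      simp [hheven x]
    have hhint_neg : IntegrableOn h (Set.Ioo (-1:ℝ) 0) := by
      have hiff := MeasureTheory.integrableOn_image_iff_integrableOn_abs_deriv_smul
        measurableSet_Ioo hnder hninj h
      rw [himneg] at hiff
      rw [hiff]
      apply hhint.congr_fun _ measurableSet_Ioo
      intro x _
      simp [hheven x]
    have hsplit : Set.Ioo (-1:ℝ) 1 = Set.Ioo (-1) 0 ∪ Set.Ico 0 1 := by
      ext t
      simp only [Set.mem_Ioo, Set.mem_Ico, Set.mem_union]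
      constructor
      · rintro ⟨h1, h2⟩
        rcases lt_or_ge t 0 with h3 | h3
        · exact Or.inl ⟨h1, h3⟩
        · exact Or.inr ⟨h3, h2⟩
      · rintro (⟨h1, h2⟩ | ⟨h1, h2⟩) <;> constructor <;> linarith
    have hdisj : Disjoint (Set.Ioo (-1:ℝ) 0) (Set.Ico 0 1) := by
      rw [Set.disjoint_left]
      rintro t ⟨_, h2⟩ ⟨h3, _⟩
      linarith
    have hico : IntegrableOn h (Set.Ico (0:ℝ) 1) := by
      rw [integrableOn_Ico_iff_integrableOn_Ioo]
      exact hhint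
    rw [hsplit, MeasureTheory.setIntegral_union hdisj measurableSet_Ico hhint_neg hico,
      MeasureTheory.integral_Ico_eq_integral_Ioo, hIoo_neg]
    ring
  -- assemble
  have hIoo_eq : ∫ x in Set.Ioo (0:ℝ) 1, h x = (4/3) * ∫ y in (0:ℝ)..1, G y * deriv Q y := by
    calc ∫ x in Set.Ioo (0:ℝ) 1, h x = ∫ y in (0:ℝ)..1, h y := by
          rw [intervalIntegral.integral_of_le zero_le_one,
            MeasureTheory.integral_Ioc_eq_integral_Ioo]
      _ = ∫ y in (0:ℝ)..1, 4/3 * (G y * deriv Q y) :=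
          intervalIntegral.integral_congr fun y _ => by rw [hhdef]; ring
      _ = 4/3 * ∫ y in (0:ℝ)..1, G y * deriv Q y := intervalIntegral.integral_const_mul _ _
  have hRHS : (∫ u in (0:ℝ)..1, (Q u - Q₁ u) * (1 - Q u) / (1 - u ^ 2) ^ 3)
      = ∫ y in (0:ℝ)..1, g y * (1 - Q y) := by
    apply intervalIntegral.integral_congr
    intro x _
    rw [hgdef]
    simp only
    rw [mul_div_right_comm]
  rw [hsubst, hrefl, hIoo_eq, key_eq, hRHS]
  ring
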